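/- Let F = F_{2^m} be a finite field of characteristic 2 and let g ∈ F[X] be a squarefree polynomial of degree t ≥ 1. In the rational function field F(X), set L_g = { A/g : A ∈ F[X], deg A < t } and L_{g²} = { B/g² : B ∈ F[X], deg B < 2t }. Then the image φ(L_g) = { u² : u ∈ L_g } of L_g under the Frobenius φ(u) = u² is an F-linear subspace of F(X), L_g ∩ φ(L_g) = {0}, and L_g + φ(L_g) = L_{g²}; in particular L_{g²} = L_g ⊕ φ(L_g). -/

import Mathlib

open Polynomial

namespace Stmt0Aux

variable {F : Type} [Field F]

lemma deg_comb {g A B : F[X]} {t : ℕ} (hgdeg : g.degree = (t:ℕ))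
    (hA : A.degree < (t:ℕ)) (hB : B.degree < (t:ℕ)) :
    (A*g + B^2).degree < ((2*t : ℕ) : WithBot ℕ) := by
  apply lt_of_le_of_lt (degree_add_le _ _)
  apply max_lt
  · rcases eq_or_ne A 0 with rfl | hA0
    · simp only [zero_mul, degree_zero]
      exact WithBot.bot_lt_coe _
    · have h1 : A.natDegree < t := (natDegree_lt_iff_degree_lt (n := t) hA0).mpr hA
      rw [degree_mul, degree_eq_natDegree hA0, hgdeg, ← Nat.cast_add]
      exact_mod_cast by omega
  · rcases eq_or_ne B 0 with rfl | hB0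
    · rw [zero_pow two_ne_zero, degree_zero]
      exact WithBot.bot_lt_coe _
    · have h1 : B.natDegree < t := (natDegree_lt_iff_degree_lt (n := t) hB0).mpr hB
      rw [degree_eq_natDegree (pow_ne_zero 2 hB0), natDegree_pow]
      exact_mod_cast by omega

lemma key_surj [Fintype F] [CharP F 2]
    {g : F[X]} {t : ℕ} (ht : 1 ≤ t) (hdeg : g.natDegree = t)
    (hsqfr : Squarefree g) (C : F[X]) (hC : C.degree < ((2*t : ℕ) : WithBot ℕ)) :
    ∃ A B : F[X], A.degree < (t:ℕ) ∧ B.degree < (t:ℕ) ∧ C = A * g + B^2 := by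
  have hg0 : g ≠ 0 := fun h => by simp [h] at hdeg; omega
  have hgdeg : g.degree = (t : ℕ) := by rw [degree_eq_natDegree hg0, hdeg]
  haveI : CharP F[X] 2 := charP_of_injective_ringHom (C_injective (R := F)) 2
  have h2 : (2 : F[X]) = 0 := by
    have := CharP.cast_eq_zero F[X] 2; exact_mod_cast this
  let f : (degreeLT F t × degreeLT F t) → degreeLT F (2*t) := fun p =>
    ⟨p.1.1 * g + (p.2.1 : F[X])^2, mem_degreeLT.mpr
      (deg_comb hgdeg (mem_degreeLT.mp p.1.2) (mem_degreeLT.mp p.2.2))⟩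
  have hinj : Function.Injective f := by
    rintro ⟨⟨A₁, hA₁⟩, ⟨B₁, hB₁⟩⟩ ⟨⟨A₂, hA₂⟩, ⟨B₂, hB₂⟩⟩ h
    have h' : A₁ * g + B₁^2 = A₂ * g + B₂^2 := congrArg Subtype.val h
    have hdvd : g ∣ (B₁ + B₂)^2 := ⟨A₁ + A₂, by
      linear_combination h' + (B₁*B₂ + B₂^2 - A₁*g) * h2⟩
    have hdvd' : g ∣ B₁ + B₂ := hsqfr.isRadical 2 _ hdvd
    have hlt : (B₁ + B₂).degree < g.degree := by
      rw [hgdeg]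
      exact lt_of_le_of_lt (degree_add_le _ _)
        (max_lt (mem_degreeLT.mp hB₁) (mem_degreeLT.mp hB₂))
    have hBzero : B₁ + B₂ = 0 := eq_zero_of_dvd_of_degree_lt hdvd' hlt
    have hB : B₁ = B₂ := by
      have h3 := eq_neg_of_add_eq_zero_left hBzero
      rwa [CharTwo.neg_eq] at h3
    have hA : A₁ = A₂ := by
      rw [hB] at h'
      exact mul_right_cancel₀ hg0 (add_right_cancel h')
    simp [Prod.ext_iff, Subtype.ext_iff, hA, hB]
  haveI : Fintype (degreeLT F t) := Fintype.ofEquiv _ (degreeLTEquiv F t).toEquiv.symm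
  haveI : Fintype (degreeLT F (2*t)) := Fintype.ofEquiv _ (degreeLTEquiv F (2*t)).toEquiv.symm
  have hcardn : ∀ n : ℕ, ∀ (_ : Fintype (degreeLT F n)),
      Fintype.card (degreeLT F n) = Fintype.card F ^ n := by
    intro n inst
    rw [Fintype.card_congr (degreeLTEquiv F n).toEquiv]
    simp
  have hcard : Fintype.card (degreeLT F t × degreeLT F t)
      = Fintype.card (degreeLT F (2*t)) := by
    rw [Fintype.card_prod, hcardn t _, hcardn (2*t) _, ← pow_add]
    ring_nf
  have hsurj : Function.Surjective f :=
    ((Fintype.bijective_iff_injective_and_card f).mpr ⟨hinj, hcard⟩).2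
  obtain ⟨⟨⟨A, hA⟩, ⟨B, hB⟩⟩, hf⟩ := hsurj ⟨C, mem_degreeLT.mpr hC⟩
  exact ⟨A, B, mem_degreeLT.mp hA, mem_degreeLT.mp hB,
    (congrArg Subtype.val hf).symm⟩

end Stmt0Aux

theorem syzygy_distinguisher_stmt0
    (F : Type) [Field F] [Fintype F] (m : ℕ) (hm : 1 ≤ m)
    (hcard : Fintype.card F = 2 ^ m) (hchar : ringChar F = 2)
    (g : Polynomial F) (t : ℕ) (ht : 1 ≤ t) (hdeg : g.natDegree = t)
    (hsqfr : Squarefree g)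
    (Lg : Set (RatFunc F))
    (hLg : Lg = {u | ∃ A : Polynomial F, A.degree < (t : ℕ) ∧
      u = algebraMap (Polynomial F) (RatFunc F) A / algebraMap (Polynomial F) (RatFunc F) g})
    (Lg2 : Set (RatFunc F))
    (hLg2 : Lg2 = {u | ∃ B : Polynomial F, B.degree < (2 * t : ℕ) ∧
      u = algebraMap (Polynomial F) (RatFunc F) B / algebraMap (Polynomial F) (RatFunc F) (g ^ 2)})
    (phiLg : Set (RatFunc F)) (hphiLg : phiLg = {w | ∃ u ∈ Lg, w = u ^ 2}) :
    (∃ W : Submodule F (RatFunc F), (W : Set (RatFunc F)) = phiLg)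
    ∧ Lg ∩ phiLg = {0}
    ∧ {w | ∃ a ∈ Lg, ∃ b ∈ phiLg, w = a + b} = Lg2 := by
  haveI hF2 : CharP F 2 := ringChar.of_eq hchar
  haveI hR2 : CharP (RatFunc F) 2 :=
    charP_of_injective_ringHom (algebraMap F (RatFunc F)).injective 2
  subst hLg hLg2 hphiLg
  set ι := algebraMap (Polynomial F) (RatFunc F) with hι
  have hinj : Function.Injective ι := IsFractionRing.injective _ _
  have hg0 : g ≠ 0 := fun h => by simp [h] at hdeg; omega
  have hgdeg : g.degree = (t : ℕ) := by rw [Polynomial.degree_eq_natDegree hg0, hdeg]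
  have hG : ι g ≠ 0 := fun h => hg0 (hinj (by simpa using h))
  have hzero_Lg : (0 : RatFunc F) ∈ {u | ∃ A : Polynomial F, A.degree < (t : ℕ) ∧
      u = ι A / ι g} := by
    refine ⟨0, ?_, by simp⟩
    rw [Polynomial.degree_zero]
    exact WithBot.bot_lt_coe t
  have hzero_phi : ∃ u, (∃ A : Polynomial F, A.degree < (t : ℕ) ∧ u = ι A / ι g) ∧
      (0 : RatFunc F) = u ^ 2 := ⟨0, hzero_Lg, by simp⟩
  refine ⟨⟨{ carrier := {w | ∃ u ∈ {u | ∃ A : Polynomial F, A.degree < (t : ℕ) ∧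
            u = ι A / ι g}, w = u ^ 2}
             add_mem' := ?_
             zero_mem' := hzero_phi
             smul_mem' := ?_ }, rfl⟩, ?_, ?_⟩
  · -- add_mem
    rintro a b ⟨u, ⟨A₁, hA₁, rfl⟩, rfl⟩ ⟨v, ⟨A₂, hA₂, rfl⟩, rfl⟩
    refine ⟨ι (A₁ + A₂) / ι g, ⟨A₁ + A₂,
      lt_of_le_of_lt (Polynomial.degree_add_le _ _) (max_lt hA₁ hA₂), rfl⟩, ?_⟩
    rw [map_add, add_div, CharTwo.add_sq]
  · -- smul_mem
    rintro c w ⟨u, ⟨A, hA, rfl⟩, rfl⟩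
    obtain ⟨d, hd⟩ := FiniteField.isSquare_of_char_two hchar c
    refine ⟨ι (Polynomial.C d * A) / ι g, ⟨Polynomial.C d * A, ?_, rfl⟩, ?_⟩
    · calc (Polynomial.C d * A).degree = (d • A).degree := by
            rw [Polynomial.smul_eq_C_mul]
        _ ≤ A.degree := Polynomial.degree_smul_le _ _
        _ < (t : ℕ) := hA
    · rw [Algebra.smul_def, IsScalarTower.algebraMap_apply F (Polynomial F) (RatFunc F),
        Polynomial.algebraMap_eq, hd, map_mul, map_mul]
      field_simp
      rw [← hι, map_mul]
      ring
  · -- intersection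
    ext w
    simp only [Set.mem_inter_iff, Set.mem_setOf_eq, Set.mem_singleton_iff]
    constructor
    · rintro ⟨⟨A, hA, rfl⟩, u, ⟨B, hB, rfl⟩, hw⟩
      have hBg : (ι B / ι g) ^ 2 = ι (B ^ 2) / ι (g ^ 2) := by
        rw [div_pow, map_pow, map_pow]
      rw [hBg] at hw
      have hpoly : A * g ^ 2 = B ^ 2 * g := by
        apply hinj
        rw [map_mul, map_mul]
        have hG2 : ι (g ^ 2) ≠ 0 := by rw [map_pow]; exact pow_ne_zero 2 hG
        field_simp at hw
        rw [map_pow, map_pow] at hw ⊢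
        linear_combination hw
      have hAg : A * g = B ^ 2 := by
        apply mul_right_cancel₀ hg0
        linear_combination hpoly
      have hdvd : g ∣ B := hsqfr.isRadical 2 B ⟨A, by linear_combination -hAg⟩
      have hB0 : B = 0 := Polynomial.eq_zero_of_dvd_of_degree_lt hdvd (hgdeg ▸ hB)
      have hA0 : A = 0 := by
        have : A * g = 0 := by rw [hAg, hB0]; ring
        exact (mul_eq_zero.mp this).resolve_right hg0
      simp [hA0]
    · rintro rfl
      exact ⟨hzero_Lg, hzero_phi⟩
  · -- sum
    ext w
    simp only [Set.mem_setOf_eq]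
    constructor
    · rintro ⟨a, ⟨A, hA, rfl⟩, b, ⟨u, ⟨B, hB, rfl⟩, rfl⟩, rfl⟩
      refine ⟨A * g + B ^ 2, Stmt0Aux.deg_comb hgdeg hA hB, ?_⟩
      rw [map_add, map_mul, map_pow, map_pow]
      field_simp
    · rintro ⟨Cp, hC, rfl⟩
      obtain ⟨A, B, hA, hB, rfl⟩ := Stmt0Aux.key_surj ht hdeg hsqfr Cp hC
      refine ⟨ι A / ι g, ⟨A, hA, rfl⟩, (ι B / ι g) ^ 2, ⟨ι B / ι g, ⟨B, hB, rfl⟩, rfl⟩, ?_⟩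
      rw [map_add, map_mul, map_pow, map_pow]
      field_simp
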